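/- If vec(β_{1s})ᵀ vec(β_{1t}) = 0 and vec(β_{2s})ᵀ vec(β_{2t}) = 0 for all s ≠ t, and ‖β_{1k}‖_F = ‖β_{2k}‖_F > 0 for all k ∈ [d], then the matrices {vec(β_{2k}) vec(β_{1k})ᵀ / ‖β_{1k}‖_F²}_{k=1}^d form the rank-one terms of a singular value decomposition of R(Σ_k β_{2k} ⊗ β_{1k}) with singular values σ_k = ‖β_{1k}‖_F², and rank(R(Σ_k β_{2k} ⊗ β_{1k})) = d. -/

import Mathlib

open Matrix Kronecker
namespace KPF

/-- Column-major vectorization of a matrix, indexed by (column, row). -/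
def vec {p q : ℕ} (M : Matrix (Fin p) (Fin q) ℝ) : Fin q × Fin p → ℝ :=
  fun jc => M jc.2 jc.1

/-- The Pitsianis–Van Loan rearrangement operator: rows of `R M` are the
vectorized `p1 × q1` blocks of `M`. -/
def R {p1 p2 q1 q2 : ℕ} (M : Matrix (Fin p2 × Fin p1) (Fin q2 × Fin q1) ℝ) :
    Matrix (Fin q2 × Fin p2) (Fin q1 × Fin p1) ℝ :=
  fun ji cr => M (ji.2, cr.2) (ji.1, cr.1)

/-- Frobenius norm. -/
noncomputable def frob {m n : Type*} [Fintype m] [Fintype n] (M : Matrix m n ℝ) : ℝ :=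
  Real.sqrt (∑ i, ∑ j, (M i j) ^ 2)

/-- Spectral (ℓ2 operator) norm. -/
noncomputable def spec {m n : Type*} [Fintype m] [Fintype n] [DecidableEq n]
    (A : Matrix m n ℝ) : ℝ :=
  ‖LinearMap.toContinuousLinearMap (Matrix.toEuclideanLin A)‖

/-- Singular values of a matrix, in non-increasing order. -/
noncomputable def sv {m n : ℕ} (A : Matrix (Fin m) (Fin n) ℝ) : Fin n → ℝ :=
  fun k =>
    Real.sqrt ((show (Aᵀ * A).IsHermitian by simpa using Matrix.isHermitian_conjTranspose_mul_self A).eigenvalues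
      (Tuple.sort (show (Aᵀ * A).IsHermitian by simpa using Matrix.isHermitian_conjTranspose_mul_self A).eigenvalues k.rev))

/-- Smallest singular value of a square matrix. -/
noncomputable def sMin {d : ℕ} (A : Matrix (Fin d) (Fin d) ℝ) : ℝ :=
  sInf (Set.range (sv A))

/-- sin-Θ distance between the column spans of two orthonormal matrices. -/
noncomputable def sinTheta {p d : ℕ} (W1 W2 : Matrix (Fin p) (Fin d) ℝ) : ℝ :=
  Real.sqrt (1 - (sMin (W1ᵀ * W2)) ^ 2)

lemma sum_vec_sq {p q : ℕ} (M : Matrix (Fin p) (Fin q) ℝ) :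
    ∑ i, vec M i * vec M i = frob M ^ 2 := by
  rw [frob, Real.sq_sqrt (by positivity)]
  rw [Fintype.sum_prod_type, Finset.sum_comm]
  simp [vec, sq]

/-- Under mutual orthogonality of the factors, the rank-one terms
σ_k u_k v_kᵀ with u_k = vec(β_{2k})/‖β_{1k}‖_F, v_k = vec(β_{1k})/‖β_{1k}‖_F and
σ_k = ‖β_{1k}‖_F² form an SVD of R(Σ_k β_{2k} ⊗ β_{1k}), which has rank d. -/
theorem stmt7 {p1 q1 p2 q2 d : ℕ}
    (β1 : Fin d → Matrix (Fin p1) (Fin q1) ℝ)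
    (β2 : Fin d → Matrix (Fin p2) (Fin q2) ℝ)
    (horth1 : ∀ s t, s ≠ t → ∑ i, vec (β1 s) i * vec (β1 t) i = 0)
    (horth2 : ∀ s t, s ≠ t → ∑ i, vec (β2 s) i * vec (β2 t) i = 0)
    (hnorm : ∀ k, frob (β1 k) = frob (β2 k))
    (hpos : ∀ k, 0 < frob (β1 k)) :
    (∀ s t, (∑ i, ((frob (β1 s))⁻¹ • vec (β2 s)) i * ((frob (β1 t))⁻¹ • vec (β2 t)) i)
        = if s = t then 1 else 0) ∧
    (∀ s t, (∑ i, ((frob (β1 s))⁻¹ • vec (β1 s)) i * ((frob (β1 t))⁻¹ • vec (β1 t)) i)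
        = if s = t then 1 else 0) ∧
    (∀ k, 0 < frob (β1 k) ^ 2) ∧
    R (∑ k, β2 k ⊗ₖ β1 k) =
      ∑ k, (frob (β1 k) ^ 2) •
        Matrix.vecMulVec ((frob (β1 k))⁻¹ • vec (β2 k)) ((frob (β1 k))⁻¹ • vec (β1 k)) ∧
    (R (∑ k, β2 k ⊗ₖ β1 k)).rank = d := by
  have hne : ∀ k, frob (β1 k) ≠ 0 := fun k => (hpos k).ne'
  have hu : ∀ s t, (∑ i, ((frob (β1 s))⁻¹ • vec (β2 s)) i * ((frob (β1 t))⁻¹ • vec (β2 t)) i)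
      = if s = t then 1 else 0 := by
    intro s t
    have : (∑ i, ((frob (β1 s))⁻¹ • vec (β2 s)) i * ((frob (β1 t))⁻¹ • vec (β2 t)) i)
        = (frob (β1 s))⁻¹ * (frob (β1 t))⁻¹ * ∑ i, vec (β2 s) i * vec (β2 t) i := by
      rw [Finset.mul_sum]; exact Finset.sum_congr rfl fun i _ => by simp; ring
    rw [this]
    by_cases h : s = t
    · subst h
      rw [sum_vec_sq, ← hnorm s, if_pos rfl, sq]
      field_simp
      exact div_self (hne s)
    · rw [horth2 s t h, if_neg h, mul_zero]
  have hv : ∀ s t, (∑ i, ((frob (β1 s))⁻¹ • vec (β1 s)) i * ((frob (β1 t))⁻¹ • vec (β1 t)) i)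
      = if s = t then 1 else 0 := by
    intro s t
    have : (∑ i, ((frob (β1 s))⁻¹ • vec (β1 s)) i * ((frob (β1 t))⁻¹ • vec (β1 t)) i)
        = (frob (β1 s))⁻¹ * (frob (β1 t))⁻¹ * ∑ i, vec (β1 s) i * vec (β1 t) i := by
      rw [Finset.mul_sum]; exact Finset.sum_congr rfl fun i _ => by simp; ring
    rw [this]
    by_cases h : s = t
    · subst h
      rw [sum_vec_sq, if_pos rfl, sq]
      field_simp
      exact div_self (hne s)
    · rw [horth1 s t h, if_neg h, mul_zero]
  have hA : R (∑ k, β2 k ⊗ₖ β1 k) =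
      ∑ k, (frob (β1 k) ^ 2) •
        Matrix.vecMulVec ((frob (β1 k))⁻¹ • vec (β2 k)) ((frob (β1 k))⁻¹ • vec (β1 k)) := by
    funext ji cr
    simp only [R, Matrix.sum_apply, Matrix.smul_apply, Matrix.vecMulVec_apply, Pi.smul_apply,
      smul_eq_mul, Matrix.kroneckerMap_apply]
    refine Finset.sum_congr rfl fun k _ => ?_
    have hk : frob (β1 k) ^ 2 * (frob (β1 k))⁻¹ * (frob (β1 k))⁻¹ = 1 := by
      rw [sq]; field_simp
      exact div_self (hne k)
    simp only [vec]
    linear_combination (-(β2 k ji.2 ji.1 * β1 k cr.2 cr.1)) * hk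
  refine ⟨hu, hv, fun k => pow_pos (hpos k) 2, hA, ?_⟩
  -- rank
  set A := R (∑ k, β2 k ⊗ₖ β1 k) with hAdef
  set U : Matrix (Fin q2 × Fin p2) (Fin d) ℝ :=
    fun y k => frob (β1 k) ^ 2 * ((frob (β1 k))⁻¹ • vec (β2 k)) y with hU
  set V : Matrix (Fin q1 × Fin p1) (Fin d) ℝ :=
    fun x k => ((frob (β1 k))⁻¹ • vec (β1 k)) x with hV
  have hAUV : A = U * Vᵀ := by
    rw [hA]
    funext y x
    simp only [Matrix.mul_apply, Matrix.sum_apply, Matrix.smul_apply, Matrix.vecMulVec_apply,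
      Matrix.transpose_apply, hU, hV, smul_eq_mul]
    exact Finset.sum_congr rfl fun k _ => (mul_assoc _ _ _).symm
  have hVV : Vᵀ * V = 1 := by
    funext s t
    rw [Matrix.mul_apply, Matrix.one_apply]
    exact hv s t
  have hUU : Uᵀ * U = Matrix.diagonal (fun k => (frob (β1 k) ^ 2) ^ 2) := by
    funext s t
    rw [Matrix.mul_apply, Matrix.diagonal_apply]
    have : ∑ y, Uᵀ s y * U y t
        = (frob (β1 s) ^ 2) * (frob (β1 t) ^ 2) *
          ∑ y, ((frob (β1 s))⁻¹ • vec (β2 s)) y * ((frob (β1 t))⁻¹ • vec (β2 t)) y := by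
      rw [Finset.mul_sum]
      exact Finset.sum_congr rfl fun y _ => by rw [Matrix.transpose_apply]; simp [hU]; ring
    rw [this, hu s t]
    by_cases h : s = t
    · subst h; simp; ring
    · simp [h]
  have hUrank : U.rank = d := by
    refine le_antisymm (U.rank_le_card_width.trans (by simp)) ?_
    have h1 : (Uᵀ * U).rank = d := by
      rw [Matrix.rank_of_isUnit]
      · simp
      · rw [Matrix.isUnit_iff_isUnit_det, hUU, Matrix.det_diagonal, isUnit_iff_ne_zero]
        exact Finset.prod_ne_zero_iff.2 fun k _ => pow_ne_zero _ (pow_ne_zero _ (hne k))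
    calc d = (Uᵀ * U).rank := h1.symm
      _ ≤ U.rank := Matrix.rank_mul_le_right _ _
  refine le_antisymm ?_ ?_
  · calc A.rank ≤ U.rank := hAUV ▸ Matrix.rank_mul_le_left _ _
      _ = d := hUrank
  · have hAV : A * V = U := by rw [hAUV, Matrix.mul_assoc, hVV, Matrix.mul_one]
    calc d = U.rank := hUrank.symm
      _ = (A * V).rank := by rw [hAV]
      _ ≤ A.rank := Matrix.rank_mul_le_left _ _



end KPF
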